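/- Let χ = {a_0 < a_1 < ... < a_k} be a finite subset of ℝ and let f_χ(x) = 2·dist(x, χ) = 2·min_i |x - a_i|. For any r > 0 that is not equal to any gap a_{i+1} - a_i, the number of connected components of the sublevel set f_χ^{-1}((-∞, r]) equals 1 plus the number of indices i with a_{i+1} - a_i > r. -/

import Mathlib

open Metric Set Finset

/-- For χ = {a 0 < ... < a k} ⊂ ℝ and f_χ(x) = 2·dist(x, χ), for any r > 0 not equal to
any gap, the number of connected components of the sublevel set f_χ⁻¹((-∞, r]) equals
1 plus the number of gaps strictly greater than r. -/
theorem stmt1 (k : ℕ) (a : Fin (k + 1) → ℝ) (ha : StrictMono a) (r : ℝ) (hr : 0 < r)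
    (hgap : ∀ i : Fin k, a i.succ - a i.castSucc ≠ r) :
    Nat.card (ConnectedComponents {x : ℝ | 2 * Metric.infDist x (Set.range a) ≤ r}) =
      1 + (Finset.univ.filter fun i : Fin k => r < a i.succ - a i.castSucc).card := by
  classical
  set S : Set ℝ := {x : ℝ | 2 * Metric.infDist x (Set.range a) ≤ r} with hSdef
  set B : Finset (Fin k) := Finset.univ.filter fun i : Fin k => r < a i.succ - a i.castSucc
    with hBdef
  set m : ℕ := B.card with hmdef
  have ht : (0:ℝ) < r / 2 := by linarith
  -- membership in S
  have memS : ∀ x : ℝ, x ∈ S ↔ ∃ i, |x - a i| ≤ r / 2 := by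
    intro x
    constructor
    · intro hx
      obtain ⟨y, hy, hxy⟩ := ((Set.finite_range a).isCompact).exists_infDist_eq_dist
        (Set.range_nonempty a) x
      obtain ⟨i, rfl⟩ := hy
      refine ⟨i, ?_⟩
      rw [Real.dist_eq] at hxy
      have hx' : 2 * Metric.infDist x (Set.range a) ≤ r := hx
      rw [hxy] at hx'
      linarith
    · rintro ⟨i, hi⟩
      have h1 : Metric.infDist x (Set.range a) ≤ dist x (a i) :=
        Metric.infDist_le_dist_of_mem (Set.mem_range_self i)
      rw [Real.dist_eq] at h1
      show 2 * Metric.infDist x (Set.range a) ≤ r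
      linarith
  have haS : ∀ i : Fin (k + 1), a i ∈ S := by
    intro i
    rw [memS]
    exact ⟨i, by simp [le_of_lt ht]⟩
  -- the counting function
  set c : ℕ → ℕ := fun n => (B.filter fun j : Fin k => (j : ℕ) < n).card with hcdef
  have cmono : Monotone c := by
    intro i i' h
    apply Finset.card_le_card
    intro j hj
    simp only [Finset.mem_filter] at hj ⊢
    exact ⟨hj.1, lt_of_lt_of_le hj.2 h⟩
  have ck : c k = m := by
    rw [hcdef, hmdef]
    simp only
    congr 1
    exact Finset.filter_true_of_mem (fun j _ => j.isLt)
  have cstep : ∀ i : ℕ, c (i + 1) ≤ c i + 1 := by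
    intro i
    have hsub : (B.filter fun j : Fin k => (j : ℕ) < i + 1) ⊆
        (B.filter fun j : Fin k => (j : ℕ) < i) ∪ (B.filter fun j : Fin k => (j : ℕ) = i) := by
      intro j hj
      simp only [Finset.mem_filter, Finset.mem_union] at hj ⊢
      obtain ⟨h1, h2⟩ := hj
      rcases Nat.lt_succ_iff_lt_or_eq.mp h2 with h | h
      · exact Or.inl ⟨h1, h⟩
      · exact Or.inr ⟨h1, h⟩
    have h1 : (B.filter fun j : Fin k => (j : ℕ) = i).card ≤ 1 := by
      apply Finset.card_le_one.2
      intro x hx y hy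
      simp only [Finset.mem_filter] at hx hy
      exact Fin.ext (hx.2.trans hy.2.symm)
    have h2 := Finset.card_le_card hsub
    have h3 := Finset.card_union_le (B.filter fun j : Fin k => (j : ℕ) < i)
      (B.filter fun j : Fin k => (j : ℕ) = i)
    show (B.filter fun j : Fin k => (j : ℕ) < i + 1).card ≤
      (B.filter fun j : Fin k => (j : ℕ) < i).card + 1
    omega
  have csurj : ∀ n : ℕ, n ≤ m → ∃ i : ℕ, i ≤ k ∧ c i = n := by
    have key : ∀ i : ℕ, ∀ n : ℕ, n ≤ c i → ∃ j : ℕ, j ≤ i ∧ c j = n := by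
      intro i
      induction i with
      | zero =>
        intro n hn
        have h0 : c 0 = 0 := by
          simp [hcdef]
        exact ⟨0, le_refl _, by omega⟩
      | succ i ih =>
        intro n hn
        by_cases h : n ≤ c i
        · obtain ⟨j, hj1, hj2⟩ := ih n h
          exact ⟨j, by omega, hj2⟩
        · refine ⟨i + 1, le_refl _, ?_⟩
          have := cstep i
          omega
    intro n hn
    exact key k n (by rw [ck]; exact hn)
  -- threshold lemma
  have L2 : ∀ x ∈ S, ∀ j : Fin k, a j.castSucc + r / 2 < x → a j.succ - r / 2 ≤ x := by
    intro x hx j hj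
    obtain ⟨i, hi⟩ := (memS x).mp hx
    rw [abs_le] at hi
    rcases le_or_gt (i : ℕ) (j : ℕ) with h | h
    · exfalso
      have : a i ≤ a j.castSucc := ha.monotone (by simp [Fin.le_def, h])
      linarith [hi.2]
    · have : a j.succ ≤ a i := ha.monotone (by simp [Fin.le_def]; omega)
      linarith [hi.1]
  -- the locally constant function
  set φ : S → ℕ := fun x => (B.filter fun j : Fin k => a j.castSucc + r / 2 < (x : ℝ)).card
    with hφdef
  have hφball : ∀ (x : S) (i : Fin (k + 1)), |(x : ℝ) - a i| ≤ r / 2 → φ x = c i := by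
    intro x i hxi
    rw [abs_le] at hxi
    have : (B.filter fun j : Fin k => a j.castSucc + r / 2 < (x : ℝ)) =
        (B.filter fun j : Fin k => (j : ℕ) < (i : ℕ)) := by
      apply Finset.filter_congr
      intro j hjB
      constructor
      · intro h
        by_contra hc
        push_neg at hc
        have : a i ≤ a j.castSucc := ha.monotone (by simp [Fin.le_def]; omega)
        linarith [hxi.2]
      · intro h
        have h1 : a j.succ ≤ a i := ha.monotone (by simp [Fin.le_def]; omega)
        have h2 : r < a j.succ - a j.castSucc := by
          rw [hBdef] at hjB
          exact (Finset.mem_filter.mp hjB).2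
        linarith [hxi.1]
    exact congrArg Finset.card this
  have hlc : IsLocallyConstant φ := by
    rcases Finset.eq_empty_or_nonempty B with hBe | hBne
    · have : φ = fun _ => 0 := by
        funext x
        rw [hφdef]
        simp [hBe]
      rw [this]
      exact IsLocallyConstant.const 0
    · rw [IsLocallyConstant.iff_exists_open]
      intro x
      set ε : ℝ := B.inf' hBne (fun j => a j.succ - a j.castSucc - r) with hεdef
      have hε : 0 < ε := by
        rw [hεdef, Finset.lt_inf'_iff]
        intro j hj
        rw [hBdef] at hj
        have := (Finset.mem_filter.mp hj).2
        linarith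
      refine ⟨Subtype.val ⁻¹' Metric.ball (x : ℝ) ε,
        Metric.isOpen_ball.preimage continuous_subtype_val,
        by simp [Metric.mem_ball_self hε], ?_⟩
      intro y hy
      have hyx : |(y : ℝ) - (x : ℝ)| < ε := by
        simpa [Subtype.dist_eq, Real.dist_eq] using hy
      have hcong : ∀ j ∈ B, ((a j.castSucc + r / 2 < (y : ℝ)) ↔ (a j.castSucc + r / 2 < (x : ℝ))) := by
        intro j hjB
        have hεle : ε ≤ a j.succ - a j.castSucc - r := Finset.inf'_le _ hjB
        constructor
        · intro h
          have := L2 (y : ℝ) y.2 j h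
          have := abs_lt.mp hyx
          linarith
        · intro h
          have := L2 (x : ℝ) x.2 j h
          have := abs_lt.mp hyx
          linarith
      exact congrArg Finset.card (Finset.filter_congr hcong)
  -- claim C : gap-free intervals are inside S
  have hC : ∀ i i' : Fin (k + 1), i ≤ i' → c i = c i' →
      Set.Icc (a i - r / 2) (a i' + r / 2) ⊆ S := by
    intro i i' hii' hcc x hx
    have hnogap : ∀ j : Fin k, (i : ℕ) ≤ (j : ℕ) → (j : ℕ) < (i' : ℕ) →
        a j.succ - a j.castSucc < r := by
      intro j hji hji'
      rcases lt_trichotomy (a j.succ - a j.castSucc) r with h | h | h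
      · exact h
      · exact absurd h (hgap j)
      · exfalso
        have hjB : j ∈ B := by
          rw [hBdef]; exact Finset.mem_filter.mpr ⟨Finset.mem_univ _, h⟩
        have hjni : j ∉ (B.filter fun p : Fin k => (p : ℕ) < (i : ℕ)) := by
          simp only [Finset.mem_filter]
          omega
        have hsub : insert j (B.filter fun p : Fin k => (p : ℕ) < (i : ℕ)) ⊆
            (B.filter fun p : Fin k => (p : ℕ) < (i' : ℕ)) := by
          apply Finset.insert_subset
          · exact Finset.mem_filter.mpr ⟨hjB, hji'⟩
          · intro p hp
            simp only [Finset.mem_filter] at hp ⊢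
            have : (i : ℕ) ≤ (i' : ℕ) := hii'
            exact ⟨hp.1, by omega⟩
        have := Finset.card_le_card hsub
        rw [Finset.card_insert_of_notMem hjni] at this
        have h1 : c i + 1 ≤ c i' := this
        omega
    -- find the largest index whose left endpoint is below x
    set F : Finset (Fin (k + 1)) := Finset.univ.filter fun j => j ≤ i' ∧ a j - r / 2 ≤ x
      with hFdef
    have hiF : i ∈ F := by
      rw [hFdef]
      refine Finset.mem_filter.mpr ⟨Finset.mem_univ _, hii', ?_⟩
      exact hx.1
    have hFne : F.Nonempty := ⟨i, hiF⟩
    set j : Fin (k + 1) := F.max' hFne with hjdef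
    have hjmem : j ≤ i' ∧ a j - r / 2 ≤ x := by
      rw [hjdef]
      have h := Finset.mem_filter.mp (F.max'_mem hFne)
      exact h.2
    have hij : i ≤ j := F.le_max' i hiF
    rcases le_or_gt x (a j + r / 2) with hxj | hxj
    · rw [memS]
      exact ⟨j, abs_le.mpr ⟨by linarith [hjmem.2], by linarith⟩⟩
    · exfalso
      have hji' : (j : ℕ) < (i' : ℕ) := by
        rcases lt_or_eq_of_le hjmem.1 with h | h
        · exact h
        · exfalso
          rw [h] at hxj
          linarith [hx.2]
      have hjk : (j : ℕ) < k := by omega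
      set p : Fin k := ⟨(j : ℕ), hjk⟩ with hpdef
      have hpc : p.castSucc = j := by
        apply Fin.ext
        simp [hpdef]
      have hgaplt : a p.succ - a p.castSucc < r := by
        apply hnogap
        · simpa [hpdef] using (show (i : ℕ) ≤ (j : ℕ) from hij)
        · simpa [hpdef] using hji'
      have hpsF : p.succ ∈ F := by
        rw [hFdef]
        refine Finset.mem_filter.mpr ⟨Finset.mem_univ _, ?_, ?_⟩
        · rw [Fin.le_def]
          simp [hpdef]
          omega
        · rw [hpc] at hgaplt
          linarith
      have hle2 : p.succ ≤ j := by rw [hjdef]; exact F.le_max' p.succ hpsF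
      rw [Fin.le_def] at hle2
      simp [hpdef] at hle2
  -- witnesses
  have hwit : ∀ n : Fin (m + 1), ∃ i : Fin (k + 1), c i = (n : ℕ) := by
    intro n
    obtain ⟨i, hik, hci⟩ := csurj n (Nat.lt_succ_iff.mp n.isLt)
    exact ⟨⟨i, Nat.lt_succ_of_le hik⟩, hci⟩
  choose I hI using hwit
  set w : Fin (m + 1) → S := fun n => ⟨a (I n), haS _⟩ with hwdef
  have hφw : ∀ n : Fin (m + 1), φ (w n) = (n : ℕ) := by
    intro n
    have : φ (w n) = c (I n) := hφball (w n) (I n) (by simp [hwdef, le_of_lt ht])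
    rw [this, hI]
  set g : Fin (m + 1) → ConnectedComponents S := fun n => ConnectedComponents.mk (w n)
    with hgdef
  -- injectivity
  have ginj : Function.Injective g := by
    intro n n' h
    rw [hgdef] at h
    simp only at h
    rw [ConnectedComponents.coe_eq_coe] at h
    have hmem : w n' ∈ connectedComponent (w n) := by
      rw [h]; exact mem_connectedComponent
    have := hlc.apply_eq_of_isPreconnected isPreconnected_connectedComponent
      mem_connectedComponent hmem
    rw [hφw, hφw] at this
    exact Fin.ext this
  -- surjectivity
  have key : ∀ u v : Fin (k + 1), u ≤ v → c u = c v → ∀ y z : S,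
      |(y : ℝ) - a u| ≤ r / 2 → |(z : ℝ) - a v| ≤ r / 2 →
      (ConnectedComponents.mk y : ConnectedComponents S) = ConnectedComponents.mk z := by
    intro u v huv hcuv y z hy hz
    have hJS : Set.Icc (a u - r / 2) (a v + r / 2) ⊆ S := hC u v huv hcuv
    set J : Set ℝ := Set.Icc (a u - r / 2) (a v + r / 2) with hJdef
    have hpre : IsPreconnected (Subtype.val ⁻¹' J : Set S) := by
      rw [← Topology.IsInducing.subtypeVal.isPreconnected_image]
      have himg : (Subtype.val '' (Subtype.val ⁻¹' J : Set S)) = J := by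
        rw [Set.image_preimage_eq_inter_range, Subtype.range_val]
        exact Set.inter_eq_left.mpr hJS
      rw [himg]
      exact isPreconnected_Icc
    have hauv : a u ≤ a v := ha.monotone huv
    have hyJ : y ∈ (Subtype.val ⁻¹' J : Set S) := by
      rw [abs_le] at hy
      exact ⟨by linarith [hy.1], by linarith [hy.2]⟩
    have hzJ : z ∈ (Subtype.val ⁻¹' J : Set S) := by
      rw [abs_le] at hz
      exact ⟨by linarith [hz.1], by linarith [hz.2]⟩
    have hsub := hpre.subset_connectedComponent hyJ
    exact ConnectedComponents.coe_eq_coe.mpr (connectedComponent_eq (hsub hzJ))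
  have gsurj : Function.Surjective g := by
    intro q
    obtain ⟨x, rfl⟩ := ConnectedComponents.surjective_coe q
    obtain ⟨i, hi⟩ := (memS x).mp x.2
    have hcile : c i ≤ m := by
      rw [← ck]
      exact cmono (Nat.lt_succ_iff.mp i.isLt)
    set n : Fin (m + 1) := ⟨c i, Nat.lt_succ_of_le hcile⟩ with hndef
    refine ⟨n, ?_⟩
    have hcI : c (I n) = c i := by rw [hI]
    have hwa : |((w n : S) : ℝ) - a (I n)| ≤ r / 2 := by
      rw [hwdef]
      simp [le_of_lt ht]
    rcases le_total (I n) i with hle | hle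
    · exact key (I n) i hle hcI (w n) x hwa hi
    · exact (key i (I n) hle hcI.symm x (w n) hi hwa).symm
  have hbij := Nat.card_eq_of_bijective g ⟨ginj, gsurj⟩
  rw [← hbij, Nat.card_eq_fintype_card, Fintype.card_fin]
  omega
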